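/- Let k ≥ 1 be an integer, n_1, …, n_k ≥ 2 integers, q ≥ 1 an integer, and A = Σ_{i=1}^k 1/(2 + n_i) with A ≤ 1/3. Let x_{i,α} (for 1 ≤ i ≤ k, 1 ≤ α ≤ n_i) and y_1, …, y_q be real numbers, with y_q the distinguished entry. Set X_i = Σ_{α=1}^{n_i} x_{i,α}, M = q + 3k, and T = Σ_{i,α} x_{i,α} + Σ_{r=1}^q y_r. Then Σ_{1≤r<s≤q} y_r y_s + (Σ_i X_i)(Σ_r y_r) + Σ_{i<j} X_i X_j − Σ_{s=1}^{q−1} y_s² − Σ_{i,α} x_{i,α}² ≤ ((M − 1 − 6A)/(2(M + 2 − 6A))) · T², with equality if and only if y_q = (2 + n_i) x_{i,α} = 3 y_s for every i, every α ∈ {1,…,n_i}, and every s ∈ {1,…,q−1}. -/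

import Mathlib

lemma pair_sum_sq {m : ℕ} (f : Fin m → ℝ) :
    (∑ i, f i)^2 = (∑ i, (f i)^2) +
      2 * ∑ i : Fin m, ∑ j ∈ Finset.univ.filter (fun j => i < j), f i * f j := by
  have h1 : (∑ i, f i)^2 = ∑ i : Fin m, ∑ j : Fin m, f i * f j := by
    rw [sq, Finset.sum_mul_sum]
  have hsplit : ∀ i : Fin m,
      (Finset.univ.filter (fun j : Fin m => ¬ i < j)) =
        insert i (Finset.univ.filter (fun j : Fin m => j < i)) := by
    intro i
    ext j
    simp only [Finset.mem_filter, Finset.mem_univ, true_and, Finset.mem_insert, not_lt]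
    constructor
    · intro h
      rcases lt_or_eq_of_le h with h' | h'
      · exact Or.inr h'
      · exact Or.inl h'
    · rintro (rfl | h); · exact le_refl _
      · exact le_of_lt h
  have h2 : ∀ i : Fin m, (∑ j : Fin m, f i * f j) =
      (∑ j ∈ Finset.univ.filter (fun j => i < j), f i * f j) +
      ((f i)^2 + ∑ j ∈ Finset.univ.filter (fun j => j < i), f i * f j) := by
    intro i
    rw [← Finset.sum_filter_add_sum_filter_not Finset.univ (fun j => i < j), hsplit i,
      Finset.sum_insert (by simp), sq]
  have h3 : (∑ i : Fin m, ∑ j ∈ Finset.univ.filter (fun j => j < i), f i * f j) =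
      ∑ i : Fin m, ∑ j ∈ Finset.univ.filter (fun j => i < j), f i * f j := by
    rw [Finset.sum_comm' (t' := Finset.univ) (s' := fun j => Finset.univ.filter (fun i => j < i))
      (by intro a b; simp)]
    apply Finset.sum_congr rfl
    intro i _
    apply Finset.sum_congr rfl
    intro j _
    ring
  rw [h1]
  simp only [h2]
  rw [Finset.sum_add_distrib, Finset.sum_add_distrib, h3]
  ring

lemma sum_sq_sub_const {ι : Type*} (s : Finset ι) (f : ι → ℝ) (c : ℝ) :
    ∑ a ∈ s, (f a - c)^2 = (∑ a ∈ s, (f a)^2) - 2*c*(∑ a ∈ s, f a) + s.card * c^2 := by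
  have : ∀ a ∈ s, (f a - c)^2 = (f a)^2 - 2*c*(f a) + c^2 := fun a _ => by ring
  rw [Finset.sum_congr rfl this, Finset.sum_add_distrib,
    Finset.sum_sub_distrib, ← Finset.mul_sum, Finset.sum_const, nsmul_eq_mul]

lemma group_id (n : ℕ) (hn : 2 ≤ n) (D T : ℝ) (hD : D ≠ 0) (x : Fin n → ℝ) :
    2*D*(∑ α, (x α - (∑ β, x β)/n)^2)
      + D*((n:ℝ)+2)/n*((∑ β, x β) - 3*n*T/(((n:ℝ)+2)*D))^2
    = D*(2*(∑ α, (x α)^2) + (∑ β, x β)^2) - 6*(∑ β, x β)*T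
      + 9*T^2/D*(1 - 2/((n:ℝ)+2)) := by
  have hn0 : (n:ℝ) ≠ 0 := by
    have : (0:ℝ) < n := by exact_mod_cast Nat.lt_of_lt_of_le Nat.zero_lt_two hn
    linarith
  have hn2 : (n:ℝ)+2 ≠ 0 := by positivity
  rw [sum_sq_sub_const, Finset.card_univ, Fintype.card_fin]
  field_simp
  ring

set_option maxHeartbeats 2000000 in
theorem stmt_3 (k : ℕ) (hk : 1 ≤ k) (n : Fin k → ℕ) (hn : ∀ i, 2 ≤ n i)
    (q : ℕ) (hq : 1 ≤ q)
    (A : ℝ) (hA : A = ∑ i, 1/(2 + (n i : ℝ))) (hA3 : A ≤ 1/3)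
    (x : (i : Fin k) → Fin (n i) → ℝ) (y : Fin q → ℝ)
    (X : Fin k → ℝ) (hX : ∀ i, X i = ∑ α, x i α)
    (M : ℝ) (hM : M = (q : ℝ) + 3*k)
    (T : ℝ) (hT : T = (∑ i, ∑ α, x i α) + ∑ r, y r) :
    ((∑ r : Fin q, ∑ s ∈ Finset.univ.filter (fun s => r < s), y r * y s) +
        (∑ i, X i) * (∑ r, y r) +
        (∑ i : Fin k, ∑ j ∈ Finset.univ.filter (fun j => i < j), X i * X j) -
        (∑ s ∈ Finset.univ.filter (fun s : Fin q => (s : ℕ) < q - 1), (y s)^2) -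
        (∑ i, ∑ α, (x i α)^2) ≤
      ((M - 1 - 6*A) / (2*(M + 2 - 6*A))) * T^2) ∧
    (((∑ r : Fin q, ∑ s ∈ Finset.univ.filter (fun s => r < s), y r * y s) +
        (∑ i, X i) * (∑ r, y r) +
        (∑ i : Fin k, ∑ j ∈ Finset.univ.filter (fun j => i < j), X i * X j) -
        (∑ s ∈ Finset.univ.filter (fun s : Fin q => (s : ℕ) < q - 1), (y s)^2) -
        (∑ i, ∑ α, (x i α)^2) =
      ((M - 1 - 6*A) / (2*(M + 2 - 6*A))) * T^2) ↔
      ((∀ (i : Fin k) (α : Fin (n i)),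
          y ⟨q - 1, by omega⟩ = (2 + (n i : ℝ)) * x i α) ∧
        (∀ s : Fin q, (s : ℕ) < q - 1 → y ⟨q - 1, by omega⟩ = 3 * y s))) := by
  have hk1 : (1:ℝ) ≤ k := by exact_mod_cast hk
  have hq1 : (1:ℝ) ≤ q := by exact_mod_cast hq
  set t : Fin q := ⟨q - 1, by omega⟩ with ht
  set D := M + 2 - 6*A with hD
  have hDq : D = (q:ℝ) + 3*(k:ℝ) + 2 - 6*A := by rw [hD, hM]
  have hDpos : 0 < D := by rw [hDq]; linarith
  have hDne : D ≠ 0 := ne_of_gt hDpos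
  have hfe : Finset.univ.filter (fun s : Fin q => (s:ℕ) < q - 1) = Finset.univ.erase t := by
    ext s
    simp only [Finset.mem_filter, Finset.mem_univ, true_and, Finset.mem_erase, ht, Fin.ext_iff,
      ne_eq, Fin.val_mk, and_true]
    have := s.isLt
    omega
  have hyy : (∑ r : Fin q, ∑ s ∈ Finset.univ.filter (fun s => r < s), y r * y s)
      = ((∑ r, y r)^2 - (∑ r, (y r)^2))/2 := by linarith [pair_sum_sq y]
  have hXX : (∑ i : Fin k, ∑ j ∈ Finset.univ.filter (fun j => i < j), X i * X j)
      = ((∑ i, X i)^2 - (∑ i, (X i)^2))/2 := by linarith [pair_sum_sq X]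
  have hSy : (∑ r, y r) = (∑ s ∈ Finset.univ.erase t, y s) + y t :=
    (Finset.sum_erase_add _ _ (Finset.mem_univ t)).symm
  have hSy2 : (∑ r, (y r)^2) = (∑ s ∈ Finset.univ.erase t, (y s)^2) + (y t)^2 :=
    (Finset.sum_erase_add _ _ (Finset.mem_univ t)).symm
  have hSXx : (∑ i, ∑ α, x i α) = ∑ i, X i :=
    Finset.sum_congr rfl (fun i _ => (hX i).symm)
  have hM1 : M - 1 - 6*A = D - 3 := by rw [hD]; ring
  rw [hfe, hyy, hXX, hSy, hSy2, hM1]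
  set a1 := ∑ s ∈ Finset.univ.erase t, y s with ha1
  set a2 := ∑ s ∈ Finset.univ.erase t, (y s)^2 with ha2
  set b1 := ∑ i, X i with hb1
  set b2 := ∑ i, (X i)^2 with hb2
  set c2 := ∑ i, ∑ α, (x i α)^2 with hc2
  set yt := y t with hyt
  have hTv : T = b1 + (a1 + yt) := by rw [hT, hSXx, hSy]
  set G := (∑ i, (2*D * (∑ α, (x i α - X i/(n i))^2)
      + D*((n i:ℝ)+2)/(n i) * (X i - 3*(n i)*T/(((n i:ℝ)+2)*D))^2))
    + 3*D*(∑ s ∈ Finset.univ.erase t, (y s - T/D)^2)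
    + D*(yt - 3*T/D)^2 with hG
  have hgroup : ∀ i : Fin k, 2*D*(∑ α, (x i α - X i/(n i))^2)
      + D*((n i:ℝ)+2)/(n i) * (X i - 3*(n i)*T/(((n i:ℝ)+2)*D))^2
      = D*(2*(∑ α, (x i α)^2) + (X i)^2) - 6*(X i)*T
        + 9*T^2/D*(1 - 2/((n i:ℝ)+2)) := by
    intro i
    rw [hX i]
    exact group_id (n i) (hn i) D T hDne (x i)
  have hs1 : (∑ i, (2*D * (∑ α, (x i α - X i/(n i))^2)
      + D*((n i:ℝ)+2)/(n i) * (X i - 3*(n i)*T/(((n i:ℝ)+2)*D))^2))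
      = D*(2*c2 + b2) - 6*b1*T + 9*T^2/D*((k:ℝ) - 2*A) := by
    rw [Finset.sum_congr rfl (fun i _ => hgroup i)]
    have e1 : ∀ i : Fin k, D*(2*(∑ α, (x i α)^2) + (X i)^2) - 6*(X i)*T
        + 9*T^2/D*(1 - 2/((n i:ℝ)+2))
        = (2*D*(∑ α, (x i α)^2) + (D*(X i)^2 - 6*T*(X i))) +
          (9*T^2/D - 18*T^2/D*(1/(2 + (n i:ℝ)))) := fun i => by ring
    rw [Finset.sum_congr rfl (fun i _ => e1 i)]
    simp only [Finset.sum_add_distrib, Finset.sum_sub_distrib, ← Finset.mul_sum,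
      Finset.sum_const, Finset.card_univ, Fintype.card_fin, nsmul_eq_mul, ← hA,
      ← hc2, ← hb2, ← hb1]
    ring
  have hcard : ((Finset.univ.erase t).card : ℝ) = (q:ℝ) - 1 := by
    rw [Finset.card_erase_of_mem (Finset.mem_univ t), Finset.card_univ, Fintype.card_fin]
    have h := Nat.cast_sub hq (R := ℝ)
    simpa using h
  have hs2 : (∑ s ∈ Finset.univ.erase t, (y s - T/D)^2)
      = a2 - 2*(T/D)*a1 + ((q:ℝ)-1)*(T/D)^2 := by
    rw [sum_sq_sub_const, hcard, ← ha1, ← ha2]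
  have hGval : G = D*(2*c2 + b2 + 3*a2 + yt^2) - 3*T^2 := by
    rw [hG, hs1, hs2, hTv, hDq]
    have hDne' : (q:ℝ) + 3*(k:ℝ) + 2 - 6*A ≠ 0 := by rw [← hDq]; exact hDne
    field_simp
    ring
  have hkey : (D - 3) / (2*D) * T^2
      - (((a1 + yt)^2 - (a2 + yt^2))/2 + b1*(a1 + yt) + (b1^2 - b2)/2 - a2 - c2)
      = G / (2*D) := by
    rw [hGval, hTv]
    field_simp
    ring
  have hnpos : ∀ i : Fin k, (0:ℝ) < n i := fun i => by
    exact_mod_cast Nat.lt_of_lt_of_le Nat.zero_lt_two (hn i)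
  have hcoef : ∀ i : Fin k, 0 < D*((n i:ℝ)+2)/(n i) := fun i => by
    have h1 := hnpos i
    have h2 := hDpos
    positivity
  have hgnn : ∀ i : Fin k, 0 ≤ 2*D * (∑ α, (x i α - X i/(n i))^2)
      + D*((n i:ℝ)+2)/(n i) * (X i - 3*(n i)*T/(((n i:ℝ)+2)*D))^2 := by
    intro i
    have h1 : (0:ℝ) ≤ ∑ α, (x i α - X i/(n i))^2 :=
      Finset.sum_nonneg fun _ _ => sq_nonneg _
    have h2 := sq_nonneg (X i - 3*(n i)*T/(((n i:ℝ)+2)*D))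
    have h3 := hcoef i
    have h4 : 0 ≤ 2*D * (∑ α, (x i α - X i/(n i))^2) :=
      mul_nonneg (by linarith) h1
    exact add_nonneg h4 (mul_nonneg (le_of_lt h3) h2)
  have hSAnn : 0 ≤ ∑ i, (2*D * (∑ α, (x i α - X i/(n i))^2)
      + D*((n i:ℝ)+2)/(n i) * (X i - 3*(n i)*T/(((n i:ℝ)+2)*D))^2) :=
    Finset.sum_nonneg fun i _ => hgnn i
  have hSBinn : (0:ℝ) ≤ ∑ s ∈ Finset.univ.erase t, (y s - T/D)^2 :=
    Finset.sum_nonneg fun _ _ => sq_nonneg _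
  have hSBnn : 0 ≤ 3*D*(∑ s ∈ Finset.univ.erase t, (y s - T/D)^2) :=
    mul_nonneg (by linarith) hSBinn
  have hSCnn : 0 ≤ D*(yt - 3*T/D)^2 := mul_nonneg (le_of_lt hDpos) (sq_nonneg _)
  have hGnn : 0 ≤ G := by rw [hG]; linarith
  constructor
  · have h2D : (0:ℝ) < 2*D := by linarith
    have hdiv : 0 ≤ G / (2*D) := div_nonneg hGnn (le_of_lt h2D)
    linarith
  · have hiffG : (((a1 + yt)^2 - (a2 + yt^2))/2 + b1*(a1 + yt) + (b1^2 - b2)/2 - a2 - c2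
        = (D - 3) / (2*D) * T^2) ↔ G = 0 := by
      constructor
      · intro h
        have h0 : G/(2*D) = 0 := by rw [← hkey, h]; ring
        rcases div_eq_zero_iff.mp h0 with h' | h'
        · exact h'
        · exact absurd h' (by positivity)
      · intro h
        have h0 : G/(2*D) = 0 := by rw [h]; simp
        linarith
    rw [hiffG]
    constructor
    · intro hG0
      have hsum : (∑ i, (2*D * (∑ α, (x i α - X i/(n i))^2)
          + D*((n i:ℝ)+2)/(n i) * (X i - 3*(n i)*T/(((n i:ℝ)+2)*D))^2))
          + 3*D*(∑ s ∈ Finset.univ.erase t, (y s - T/D)^2)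
          + D*(yt - 3*T/D)^2 = 0 := by rw [← hG]; exact hG0
      have hSA0 : (∑ i, (2*D * (∑ α, (x i α - X i/(n i))^2)
          + D*((n i:ℝ)+2)/(n i) * (X i - 3*(n i)*T/(((n i:ℝ)+2)*D))^2)) = 0 := by
        linarith
      have hSB0 : (∑ s ∈ Finset.univ.erase t, (y s - T/D)^2) = 0 := by
        have h3D : 3*D*(∑ s ∈ Finset.univ.erase t, (y s - T/D)^2) = 0 := by linarith
        rcases mul_eq_zero.mp h3D with h' | h'
        · exact absurd h' (by positivity)
        · exact h'
      have hSC0 : yt - 3*T/D = 0 := by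
        have hC : D*(yt - 3*T/D)^2 = 0 := by linarith
        rcases mul_eq_zero.mp hC with h' | h'
        · exact absurd h' hDne
        · exact pow_eq_zero_iff (by norm_num) |>.mp h'
      have hytv : yt = 3*T/D := by linarith
      have hterm := (Finset.sum_eq_zero_iff_of_nonneg (fun i _ => hgnn i)).mp hSA0
      have hXz : ∀ i : Fin k, X i = 3*(n i)*T/(((n i:ℝ)+2)*D) := by
        intro i
        have h := hterm i (Finset.mem_univ i)
        have h1 : (0:ℝ) ≤ ∑ α, (x i α - X i/(n i))^2 :=
          Finset.sum_nonneg fun _ _ => sq_nonneg _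
        have h2 := sq_nonneg (X i - 3*(n i)*T/(((n i:ℝ)+2)*D))
        have h3 := hcoef i
        have h4 : 0 ≤ 2*D * (∑ α, (x i α - X i/(n i))^2) := mul_nonneg (by linarith) h1
        have h5 : D*((n i:ℝ)+2)/(n i) * (X i - 3*(n i)*T/(((n i:ℝ)+2)*D))^2 = 0 := by
          have h6 : 0 ≤ D*((n i:ℝ)+2)/(n i) * (X i - 3*(n i)*T/(((n i:ℝ)+2)*D))^2 :=
            mul_nonneg (le_of_lt h3) h2
          linarith
        rcases mul_eq_zero.mp h5 with h' | h'
        · exact absurd h' (ne_of_gt h3)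
        · have := pow_eq_zero_iff (n := 2) (by norm_num) |>.mp h'
          linarith
      have hxz : ∀ (i : Fin k) (α : Fin (n i)), x i α = X i/(n i) := by
        intro i α
        have h := hterm i (Finset.mem_univ i)
        have h2 := sq_nonneg (X i - 3*(n i)*T/(((n i:ℝ)+2)*D))
        have h3 := hcoef i
        have h1 : (0:ℝ) ≤ ∑ α, (x i α - X i/(n i))^2 :=
          Finset.sum_nonneg fun _ _ => sq_nonneg _
        have h5 : 0 ≤ D*((n i:ℝ)+2)/(n i) * (X i - 3*(n i)*T/(((n i:ℝ)+2)*D))^2 :=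
          mul_nonneg (le_of_lt h3) h2
        have h4 : 0 ≤ 2*D * (∑ α, (x i α - X i/(n i))^2) :=
          mul_nonneg (by linarith) h1
        have h6 : 2*D * (∑ α, (x i α - X i/(n i))^2) = 0 := by linarith
        have h7 : (∑ α, (x i α - X i/(n i))^2) = 0 := by
          rcases mul_eq_zero.mp h6 with h' | h'
          · exact absurd h' (by positivity)
          · exact h'
        have h8 := (Finset.sum_eq_zero_iff_of_nonneg
          (fun α _ => sq_nonneg (x i α - X i/(n i)))).mp h7 α (Finset.mem_univ α)
        have := pow_eq_zero_iff (n := 2) (by norm_num) |>.mp h8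
        linarith
      have hyz : ∀ s ∈ Finset.univ.erase t, y s = T/D := by
        intro s hs
        have h8 := (Finset.sum_eq_zero_iff_of_nonneg
          (fun s _ => sq_nonneg (y s - T/D))).mp hSB0 s hs
        have := pow_eq_zero_iff (n := 2) (by norm_num) |>.mp h8
        linarith
      constructor
      · intro i α
        have hni : (n i:ℝ) ≠ 0 := ne_of_gt (hnpos i)
        have h2n : (n i:ℝ) + 2 ≠ 0 := by positivity
        rw [hxz i α, hXz i, hytv]
        field_simp
        ring
      · intro s hs
        have hst : s ∈ Finset.univ.erase t := by
          refine Finset.mem_erase.mpr ⟨?_, Finset.mem_univ s⟩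
          intro hcontra
          have hne : (s:ℕ) ≠ q - 1 := by omega
          exact hne (by rw [hcontra, ht])
        rw [hyz s hst, hytv]
        ring
    · rintro ⟨h1, h2⟩
      have hxv : ∀ (i : Fin k) (α : Fin (n i)), x i α = yt/(2 + (n i:ℝ)) := by
        intro i α
        have h2n : (2:ℝ) + (n i) ≠ 0 := by positivity
        rw [eq_div_iff h2n]
        linear_combination - h1 i α
      have hXv : ∀ i : Fin k, X i = (n i) * yt/(2 + (n i:ℝ)) := by
        intro i
        rw [hX i, Finset.sum_congr rfl (fun α _ => hxv i α), Finset.sum_const,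
          Finset.card_univ, Fintype.card_fin, nsmul_eq_mul]
        ring
      have hyv : ∀ s ∈ Finset.univ.erase t, y s = yt/3 := by
        intro s hs
        rw [Finset.mem_erase] at hs
        have hlt : (s:ℕ) < q - 1 := by
          have h9 := s.isLt
          have hne : (s:ℕ) ≠ q - 1 := by
            intro hh
            exact hs.1 (by rw [ht]; exact Fin.ext hh)
          omega
        have := h2 s hlt
        linarith
      have ha1v : a1 = ((q:ℝ)-1) * (yt/3) := by
        rw [ha1, Finset.sum_congr rfl hyv, Finset.sum_const, nsmul_eq_mul, hcard]
      have hb1v : b1 = ((k:ℝ) - 2*A)*yt := by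
        rw [hb1, Finset.sum_congr rfl (fun i _ => hXv i)]
        have e : ∀ i : Fin k, (n i:ℝ) * yt/(2 + (n i:ℝ))
            = yt - 2*yt*(1/(2+(n i:ℝ))) := by
          intro i
          have h2n : (2:ℝ) + (n i) ≠ 0 := by positivity
          field_simp
          ring
        rw [Finset.sum_congr rfl (fun i _ => e i), Finset.sum_sub_distrib,
          Finset.sum_const, Finset.card_univ, Fintype.card_fin, nsmul_eq_mul,
          ← Finset.mul_sum, ← hA]
        ring
      have hTyt : T = D*yt/3 := by rw [hTv, ha1v, hb1v, hDq]; ring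
      rw [hG]
      have z1 : ∀ i ∈ (Finset.univ : Finset (Fin k)),
          2*D * (∑ α, (x i α - X i/(n i))^2)
          + D*((n i:ℝ)+2)/(n i) * (X i - 3*(n i)*T/(((n i:ℝ)+2)*D))^2 = 0 := by
        intro i _
        have hni : (n i:ℝ) ≠ 0 := ne_of_gt (hnpos i)
        have h2n : (2:ℝ) + (n i) ≠ 0 := by positivity
        have e1 : ∀ α : Fin (n i), x i α - X i/(n i) = 0 := by
          intro α
          rw [hxv i α, hXv i]
          field_simp
          ring
        have e2 : X i - 3*(n i)*T/(((n i:ℝ)+2)*D) = 0 := by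
          rw [hXv i, hTyt]
          field_simp
          ring
        have e3 : (∑ α, (x i α - X i/(n i))^2) = 0 :=
          Finset.sum_eq_zero (fun α _ => by rw [e1 α]; ring)
        rw [e3, e2]
        ring
      rw [Finset.sum_eq_zero z1]
      have z2 : (∑ s ∈ Finset.univ.erase t, (y s - T/D)^2) = 0 := by
        refine Finset.sum_eq_zero (fun s hs => ?_)
        have e : y s - T/D = 0 := by
          rw [hyv s hs, hTyt]
          field_simp
          ring
        rw [e]
        ring
      have z3 : yt - 3*T/D = 0 := by rw [hTyt]; field_simp; ring
      rw [z2, z3]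
      ring
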